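/- The blancmange function B is continuous on ℝ and is differentiable at no point of ℝ: for every t₀ ∈ ℝ, B is not differentiable at t₀. -/

import Mathlib

open Topology


/-- Distance from `t` to the nearest integer: the sawtooth generator of the blancmange
function. -/
noncomputable def saw (t : ℝ) : ℝ := |t - round t|

/-- `s_k(t) = s(2^k t)/2^k`. -/
noncomputable def sawk (k : ℕ) (t : ℝ) : ℝ := saw (2 ^ k * t) / 2 ^ k

/-- The blancmange (Takagi) function `B(t) = ∑_{k=0}^∞ s_k(t)`. -/
noncomputable def blanc (t : ℝ) : ℝ := ∑' k : ℕ, sawk k t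

lemma saw_nonneg (t : ℝ) : 0 ≤ saw t := abs_nonneg _

lemma saw_le_half (t : ℝ) : saw t ≤ 1 / 2 := abs_sub_round t

lemma saw_intCast (j : ℤ) : saw (j : ℝ) = 0 := by simp [saw]

lemma saw_le (t : ℝ) (m : ℤ) : saw t ≤ |t - m| := by
  by_cases h : round t = m
  · simp [saw, h]
  · have h1 : (1 : ℝ) ≤ |(round t : ℝ) - m| := by
      have : (1 : ℤ) ≤ |round t - m| := Int.one_le_abs (sub_ne_zero.mpr h)
      exact_mod_cast this
    have h2 : |(round t : ℝ) - m| ≤ |(round t:ℝ) - t| + |t - m| := abs_sub_le _ _ _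
    have h3 := saw_le_half t
    have h4 : |(round t:ℝ) - t| = saw t := by rw [abs_sub_comm]; rfl
    unfold saw at *
    linarith [abs_nonneg (t - (round t:ℝ))]

lemma saw_eq (t : ℝ) (n : ℤ) (h : |t - n| ≤ 1 / 2) : saw t = |t - n| := by
  refine le_antisymm (saw_le t n) ?_
  by_cases hr : round t = n
  · simp [saw, hr]
  · have h1 : (1 : ℝ) ≤ |(round t : ℝ) - n| := by
      have : (1 : ℤ) ≤ |round t - n| := Int.one_le_abs (sub_ne_zero.mpr hr)
      exact_mod_cast this
    have h2 : |(round t : ℝ) - n| ≤ |(round t:ℝ) - t| + |t - n| := abs_sub_le _ _ _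
    have h4 : |(round t:ℝ) - t| = saw t := by rw [abs_sub_comm]; rfl
    linarith

lemma saw_lip (a b : ℝ) : |saw a - saw b| ≤ |a - b| := by
  rw [abs_sub_le_iff]
  constructor
  · have h1 := saw_le a (round b)
    have h2 : |a - round b| ≤ |a - b| + |b - round b| := abs_sub_le _ _ _
    have : saw b = |b - round b| := rfl
    linarith
  · have h1 := saw_le b (round a)
    have h2 : |b - (round a:ℝ)| ≤ |b - a| + |a - round a| := abs_sub_le _ _ _
    have h3 : saw a = |a - round a| := rfl
    have h5 : |b - a| = |a - b| := abs_sub_comm _ _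
    linarith

lemma continuous_saw : Continuous saw := by
  have : LipschitzWith 1 saw := by
    apply LipschitzWith.of_dist_le_mul
    intro a b
    simpa [Real.dist_eq] using saw_lip a b
  exact this.continuous

lemma sawk_bound (k : ℕ) (t : ℝ) : ‖sawk k t‖ ≤ (1/2) * (1/2)^k := by
  have h1 : (0:ℝ) < 2^k := by positivity
  rw [Real.norm_eq_abs, sawk, abs_div, abs_of_nonneg (saw_nonneg _), abs_of_pos h1]
  rw [div_le_iff₀ h1]
  have := saw_le_half (2^k * t)
  have h2 : (1:ℝ)/2 * (1/2)^k * 2^k = 1/2 := by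
    field_simp; rw [← mul_pow]; norm_num
  nlinarith [saw_le_half (2^k * t)]

lemma continuous_blanc : Continuous blanc := by
  apply continuous_tsum (u := fun k => (1/2) * (1/2)^k)
  · intro k
    exact (continuous_saw.comp (continuous_const.mul continuous_id)).div_const _
  · exact (summable_geometric_of_lt_one (by norm_num) (by norm_num)).mul_left _
  · intro n x; exact sawk_bound n x

lemma saw_affine (q : ℤ) : ∃ e : ℝ, |e| = 1 ∧ ∀ u v : ℝ,
    u ∈ Set.Icc ((q : ℝ) / 2) (((q : ℝ) + 1) / 2) →
    v ∈ Set.Icc ((q : ℝ) / 2) (((q : ℝ) + 1) / 2) →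
    saw v - saw u = e * (v - u) := by
  rcases Int.even_or_odd q with ⟨n, hn⟩ | ⟨n, hn⟩
  · refine ⟨1, by norm_num, ?_⟩
    intro u v hu hv
    have key : ∀ w : ℝ, w ∈ Set.Icc ((q : ℝ) / 2) (((q : ℝ) + 1) / 2) → saw w = w - n := by
      intro w ⟨hw1, hw2⟩
      have hq : (q : ℝ) = 2 * n := by push_cast [hn]; ring
      rw [hq] at hw1 hw2
      have habs : |w - (n:ℝ)| ≤ 1 / 2 := by rw [abs_le]; constructor <;> linarith
      rw [saw_eq w n habs, abs_of_nonneg (by linarith)]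
    rw [key u hu, key v hv]; ring
  · refine ⟨-1, by norm_num, ?_⟩
    intro u v hu hv
    have key : ∀ w : ℝ, w ∈ Set.Icc ((q : ℝ) / 2) (((q : ℝ) + 1) / 2) → saw w = (n + 1) - w := by
      intro w ⟨hw1, hw2⟩
      have hq : (q : ℝ) = 2 * n + 1 := by push_cast [hn]; ring
      rw [hq] at hw1 hw2
      have habs : |w - ((n + 1 : ℤ):ℝ)| ≤ 1 / 2 := by
        push_cast; rw [abs_le]; constructor <;> linarith
      rw [saw_eq w (n + 1) habs]
      push_cast
      rw [abs_of_nonpos (by linarith)]; ring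
    rw [key u hu, key v hv]; ring

lemma slope_exists (t : ℝ) (k : ℕ) : ∃ e : ℝ, |e| = 1 ∧ ∀ u v : ℝ,
    u ∈ Set.Icc ((⌊2 ^ (k+1) * t⌋ : ℝ) / 2 ^ (k+1)) (((⌊2 ^ (k+1) * t⌋ : ℝ) + 1) / 2 ^ (k+1)) →
    v ∈ Set.Icc ((⌊2 ^ (k+1) * t⌋ : ℝ) / 2 ^ (k+1)) (((⌊2 ^ (k+1) * t⌋ : ℝ) + 1) / 2 ^ (k+1)) →
    sawk k v - sawk k u = e * (v - u) := by
  obtain ⟨e, he1, he2⟩ := saw_affine ⌊2 ^ (k+1) * t⌋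
  refine ⟨e, he1, ?_⟩
  set q : ℤ := ⌊2 ^ (k+1) * t⌋
  have hmap : ∀ w : ℝ, w ∈ Set.Icc ((q : ℝ) / 2 ^ (k+1)) (((q : ℝ) + 1) / 2 ^ (k+1)) →
      2 ^ k * w ∈ Set.Icc ((q : ℝ) / 2) (((q : ℝ) + 1) / 2) := by
    intro w ⟨h1, h2⟩
    have e1 : (q:ℝ)/2 = 2^k * ((q:ℝ)/2^(k+1)) := by rw [pow_succ]; field_simp
    have e2 : ((q:ℝ)+1)/2 = 2^k * (((q:ℝ)+1)/2^(k+1)) := by rw [pow_succ]; field_simp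
    constructor
    · rw [e1]; exact mul_le_mul_of_nonneg_left h1 (by positivity)
    · rw [e2]; exact mul_le_mul_of_nonneg_left h2 (by positivity)
  intro u v hu hv
  have := he2 (2 ^ k * u) (2 ^ k * v) (hmap u hu) (hmap v hv)
  rw [sawk, sawk]
  have hp : (0:ℝ) < 2 ^ k := by positivity
  field_simp
  rw [this]; ring

lemma dyadic_nest (t : ℝ) {a b : ℕ} (h : a ≤ b) :
    (⌊2 ^ a * t⌋ : ℝ) / 2 ^ a ≤ (⌊2 ^ b * t⌋ : ℝ) / 2 ^ b ∧
    ((⌊2 ^ b * t⌋ : ℝ) + 1) / 2 ^ b ≤ ((⌊2 ^ a * t⌋ : ℝ) + 1) / 2 ^ a := by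
  obtain ⟨c, rfl⟩ := Nat.exists_eq_add_of_le h
  have hint1 : (⌊2 ^ a * t⌋ * 2 ^ c : ℤ) ≤ ⌊2 ^ (a + c) * t⌋ := by
    rw [Int.le_floor]
    push_cast
    have h1 : (⌊2 ^ a * t⌋ : ℝ) ≤ 2 ^ a * t := Int.floor_le _
    have h2 : (0:ℝ) ≤ 2 ^ c := by positivity
    calc (⌊2 ^ a * t⌋ : ℝ) * 2 ^ c ≤ (2 ^ a * t) * 2 ^ c := by nlinarith
      _ = 2 ^ (a + c) * t := by rw [pow_add]; ring
  have hint2 : ⌊2 ^ (a + c) * t⌋ < (⌊2 ^ a * t⌋ + 1) * 2 ^ c := by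
    rw [Int.floor_lt]
    push_cast
    have h1 : 2 ^ a * t < (⌊2 ^ a * t⌋ : ℝ) + 1 := Int.lt_floor_add_one _
    have h2 : (0:ℝ) < 2 ^ c := by positivity
    calc 2 ^ (a + c) * t = (2 ^ a * t) * 2 ^ c := by rw [pow_add]; ring
      _ < ((⌊2 ^ a * t⌋:ℝ) + 1) * 2 ^ c := by nlinarith
  have hpa : (0:ℝ) < 2 ^ a := by positivity
  have hpb : (0:ℝ) < 2 ^ (a + c) := by positivity
  constructor
  · rw [div_le_div_iff₀ hpa hpb]
    have : ((⌊2 ^ a * t⌋ * 2 ^ c : ℤ) : ℝ) ≤ (⌊2 ^ (a + c) * t⌋ : ℝ) := by exact_mod_cast hint1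
    push_cast at this
    calc (⌊2 ^ a * t⌋ : ℝ) * 2 ^ (a + c) = ((⌊2 ^ a * t⌋:ℝ) * 2 ^ c) * 2 ^ a := by
          rw [pow_add]; ring
      _ ≤ (⌊2 ^ (a + c) * t⌋ : ℝ) * 2 ^ a := by nlinarith
  · rw [div_le_div_iff₀ hpb hpa]
    have : ((⌊2 ^ (a + c) * t⌋ + 1 : ℤ) : ℝ) ≤ (((⌊2 ^ a * t⌋ + 1) * 2 ^ c : ℤ) : ℝ) := by
      exact_mod_cast hint2
    push_cast at this
    calc ((⌊2 ^ (a+c) * t⌋ : ℝ) + 1) * 2 ^ a ≤ (((⌊2 ^ a * t⌋:ℝ) + 1) * 2 ^ c) * 2 ^ a := by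
          nlinarith
      _ = ((⌊2 ^ a * t⌋ : ℝ) + 1) * 2 ^ (a + c) := by rw [pow_add]; ring

lemma sawk_dyadic_zero {k n : ℕ} (h : n ≤ k) (j : ℤ) : sawk k ((j : ℝ) / 2 ^ n) = 0 := by
  obtain ⟨c, rfl⟩ := Nat.exists_eq_add_of_le h
  have : (2:ℝ) ^ (n + c) * ((j:ℝ) / 2 ^ n) = ((j * 2 ^ c : ℤ) : ℝ) := by
    push_cast
    rw [pow_add]
    field_simp
  rw [sawk, this, saw_intCast, zero_div]

lemma blanc_dyadic (n : ℕ) (j : ℤ) :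
    blanc ((j : ℝ) / 2 ^ n) = ∑ k ∈ Finset.range n, sawk k ((j : ℝ) / 2 ^ n) := by
  apply tsum_eq_sum
  intro k hk
  exact sawk_dyadic_zero (by simp [Finset.mem_range] at hk; omega) j

/-- The blancmange function is continuous and nowhere differentiable. -/
theorem stmt8 : Continuous blanc ∧ ∀ t₀ : ℝ, ¬ DifferentiableAt ℝ blanc t₀ := by
  refine ⟨continuous_blanc, fun t₀ hd => ?_⟩
  have hder : HasDerivAt blanc (deriv blanc t₀) t₀ := hd.hasDerivAt
  set d := deriv blanc t₀ with hdd
  choose e he1 he2 using fun k => slope_exists t₀ k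
  set m : ℕ → ℤ := fun n => ⌊2 ^ n * t₀⌋ with hm
  set x : ℕ → ℝ := fun n => (m n : ℝ) / 2 ^ n with hx
  set y : ℕ → ℝ := fun n => ((m n : ℝ) + 1) / 2 ^ n with hy
  set c : ℕ → ℝ := fun n => 2 ^ n * (blanc (y n) - blanc (x n)) with hcdef
  have hxy : ∀ n, y n - x n = 1 / 2 ^ n := by
    intro n; simp only [hx, hy]; field_simp; ring
  have hxt : ∀ n, x n ≤ t₀ := by
    intro n
    rw [hx]
    rw [div_le_iff₀ (by positivity : (0:ℝ) < 2 ^ n)]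
    have h1 : ((m n : ℝ)) ≤ 2 ^ n * t₀ := by rw [hm]; exact Int.floor_le _
    linarith
  have hty : ∀ n, t₀ ≤ y n := by
    intro n
    rw [hy]
    rw [le_div_iff₀ (by positivity : (0:ℝ) < 2 ^ n)]
    have h1 : 2 ^ n * t₀ < (m n : ℝ) + 1 := by rw [hm]; exact Int.lt_floor_add_one _
    linarith
  have hxyle : ∀ n, x n ≤ y n := by
    intro n
    have h2 := hxy n
    have h3 : (0:ℝ) < 1 / 2 ^ n := by positivity
    linarith
  have hc : ∀ n, c n = ∑ k ∈ Finset.range n, e k := by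
    intro n
    have hby : blanc (y n) = ∑ k ∈ Finset.range n, sawk k (y n) := by
      have h2 : y n = (((m n + 1 : ℤ)) : ℝ) / 2 ^ n := by rw [hy]; push_cast; ring
      rw [h2, blanc_dyadic]
    have hbx : blanc (x n) = ∑ k ∈ Finset.range n, sawk k (x n) := by
      rw [hx]; exact blanc_dyadic n (m n)
    rw [hcdef]
    simp only
    rw [hby, hbx, ← Finset.sum_sub_distrib, Finset.mul_sum]
    apply Finset.sum_congr rfl
    intro k hk
    have hkn : k + 1 ≤ n := Finset.mem_range.mp hk
    have hnest := dyadic_nest t₀ hkn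
    have hIcc : ∀ w : ℝ, x (k+1) ≤ w → w ≤ y (k+1) →
        w ∈ Set.Icc ((⌊2 ^ (k+1) * t₀⌋ : ℝ) / 2 ^ (k+1)) (((⌊2 ^ (k+1) * t₀⌋ : ℝ) + 1) / 2 ^ (k+1)) := by
      intro w h1 h2
      simp only [hx, hy, hm] at h1 h2
      exact ⟨h1, h2⟩
    have hx1 : x (k+1) ≤ x n := by
      simp only [hx, hm]; exact (dyadic_nest t₀ hkn).1
    have hy1 : y n ≤ y (k+1) := by
      simp only [hy, hm]; exact (dyadic_nest t₀ hkn).2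
    have hmx := hIcc (x n) hx1 (le_trans (hxyle n) hy1)
    have hmy := hIcc (y n) (le_trans hx1 (hxyle n)) hy1
    rw [he2 k (x n) (y n) hmx hmy, hxy n]
    field_simp
  -- convergence of x and y to t₀
  have hhalf : Filter.Tendsto (fun n : ℕ => (1:ℝ) / 2 ^ n) Filter.atTop (𝓝 0) := by
    simp only [div_pow, one_div, ← inv_pow]
    exact tendsto_pow_atTop_nhds_zero_of_lt_one (by norm_num) (by norm_num)
  have hxlim : Filter.Tendsto x Filter.atTop (𝓝 t₀) := by
    apply tendsto_of_tendsto_of_tendsto_of_le_of_le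
      (g := fun n : ℕ => t₀ - 1 / 2 ^ n) (h := fun _ : ℕ => t₀)
    · simpa using (tendsto_const_nhds (x := t₀)).sub hhalf
    · exact tendsto_const_nhds
    · intro n
      have h1 := hty n; have h2 := hxy n; linarith
    · exact hxt
  have hylim : Filter.Tendsto y Filter.atTop (𝓝 t₀) := by
    apply tendsto_of_tendsto_of_tendsto_of_le_of_le
      (g := fun _ : ℕ => t₀) (h := fun n : ℕ => t₀ + 1 / 2 ^ n)
    · exact tendsto_const_nhds
    · simpa using (tendsto_const_nhds (x := t₀)).add hhalf
    · exact hty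
    · intro n
      have h1 := hxt n; have h2 := hxy n; linarith
  -- c n → d
  have hlim : Filter.Tendsto c Filter.atTop (𝓝 d) := by
    rw [Metric.tendsto_atTop]
    intro ε hε
    have hlo := (hasDerivAt_iff_isLittleO.mp hder).def (show (0:ℝ) < ε / 4 by linarith)
    obtain ⟨N, hN⟩ := Filter.eventually_atTop.mp ((hxlim.eventually hlo).and (hylim.eventually hlo))
    refine ⟨N, fun n hn => ?_⟩
    obtain ⟨hA, hB⟩ := hN n hn
    rw [Real.norm_eq_abs, Real.norm_eq_abs, smul_eq_mul] at hA hB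
    have hbx : |x n - t₀| ≤ 1 / 2 ^ n := by
      rw [abs_le]; have h1 := hxt n; have h2 := hty n; have h3 := hxy n
      constructor <;> linarith
    have hbyy : |y n - t₀| ≤ 1 / 2 ^ n := by
      rw [abs_le]; have h1 := hxt n; have h2 := hty n; have h3 := hxy n
      constructor <;> linarith
    have hp : (0:ℝ) < 2 ^ n := by positivity
    have key : c n - d = 2 ^ n * ((blanc (y n) - blanc t₀ - (y n - t₀) * d)
        - (blanc (x n) - blanc t₀ - (x n - t₀) * d)) := by
      rw [hcdef]
      simp only
      have h3 := hxy n
      have : (2:ℝ) ^ n * (y n - x n) = 1 := by rw [h3]; field_simp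
      linear_combination d * this
    rw [Real.dist_eq, key]
    have hub : |2 ^ n * ((blanc (y n) - blanc t₀ - (y n - t₀) * d)
        - (blanc (x n) - blanc t₀ - (x n - t₀) * d))| ≤
        2 ^ n * (ε / 4 * (1 / 2 ^ n) + ε / 4 * (1 / 2 ^ n)) := by
      rw [abs_mul, abs_of_pos hp]
      apply mul_le_mul_of_nonneg_left _ (le_of_lt hp)
      calc |(blanc (y n) - blanc t₀ - (y n - t₀) * d) - (blanc (x n) - blanc t₀ - (x n - t₀) * d)|
          ≤ |blanc (y n) - blanc t₀ - (y n - t₀) * d| + |blanc (x n) - blanc t₀ - (x n - t₀) * d| :=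
            abs_sub _ _
        _ ≤ ε / 4 * |y n - t₀| + ε / 4 * |x n - t₀| := by
            exact add_le_add hB hA
        _ ≤ ε / 4 * (1 / 2 ^ n) + ε / 4 * (1 / 2 ^ n) := by
            apply add_le_add <;> apply mul_le_mul_of_nonneg_left _ (by linarith) <;> assumption
    have hfin : (2:ℝ) ^ n * (ε / 4 * (1 / 2 ^ n) + ε / 4 * (1 / 2 ^ n)) = ε / 2 := by
      field_simp; ring
    rw [hfin] at hub
    linarith
  -- contradiction
  have hshift : Filter.Tendsto (fun n => c (n + 1)) Filter.atTop (𝓝 d) :=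
    hlim.comp (Filter.tendsto_add_atTop_nat 1)
  have hdiff : Filter.Tendsto (fun n => c (n + 1) - c n) Filter.atTop (𝓝 (d - d)) :=
    hshift.sub hlim
  rw [sub_self] at hdiff
  have heq : ∀ n, c (n + 1) - c n = e n := by
    intro n; rw [hc, hc, Finset.sum_range_succ]; ring
  have hetend : Filter.Tendsto e Filter.atTop (𝓝 0) := by
    have : (fun n => c (n + 1) - c n) = e := funext heq
    rwa [this] at hdiff
  rw [Metric.tendsto_atTop] at hetend
  obtain ⟨N, hN⟩ := hetend 1 one_pos
  have h := hN N le_rfl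
  rw [Real.dist_eq, sub_zero] at h
  rw [he1 N] at h
  linarith
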